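/- Let Ω ∈ H_n and Z ∈ ℂ^{(m,n)}. Then: (i) Ω is invertible and det(Ω/i) ≠ 0; (ii) the function x ↦ exp(πi σ(x Ω ᵗx + 2 x ᵗZ)) is integrable on ℝ^{(m,n)}; (iii) the Gaussian integral I = ∫_{ℝ^{(m,n)}} exp(πi σ(x Ω ᵗx + 2 x ᵗZ)) dx satisfies I² · det(Ω/i)^m = exp(−2πi σ(Z Ω^{-1} ᵗZ)). (Equivalently, I = det(Ω/i)^{−m/2} exp(−πi σ(Z Ω^{-1} ᵗZ)) for the branch of det(Ω/i)^{1/2} that is positive when Ω = iY with Y positive definite.) -/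

import Mathlib

open Matrix MeasureTheory Complex

lemma cov_aux {n : ℕ} (P : Matrix (Fin n) (Fin n) ℝ) (hP : IsUnit P.det)
    (f : (Fin n → ℝ) → ℂ) :
    ((∫ x : Fin n → ℝ, f x) = |P.det| • ∫ v : Fin n → ℝ, f (P *ᵥ v)) ∧
      (Integrable f ↔ Integrable fun v : Fin n → ℝ => f (P *ᵥ v)) := by
  have hdet : P.det ≠ 0 := by simpa [isUnit_iff_ne_zero] using hP
  letI iP : Invertible P := P.invertibleOfIsUnitDet hP
  let e0 : (Fin n → ℝ) ≃ₗ[ℝ] (Fin n → ℝ) := Matrix.toLinearEquiv' P iP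
  let e : (Fin n → ℝ) ≃ᵐ (Fin n → ℝ) :=
    (e0.toContinuousLinearEquiv.toHomeomorph).toMeasurableEquiv
  have he : ⇑e = fun v => P *ᵥ v := rfl
  have hmap : Measure.map (⇑e) volume = ENNReal.ofReal |P.det⁻¹| • volume := by
    have h1 := Measure.map_linearMap_addHaar_eq_smul_addHaar (volume : Measure (Fin n → ℝ))
      (f := Matrix.toLin' P) (by rw [LinearMap.det_toLin']; exact hdet)
    rw [LinearMap.det_toLin'] at h1
    rw [he]
    convert h1 using 2
    · rfl
    · funext v; exact (Matrix.toLin'_apply P v).symm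
  have habs : |P.det⁻¹| = |P.det|⁻¹ := abs_inv _
  have hc0 : ENNReal.ofReal |P.det⁻¹| ≠ 0 := by
    simp only [ne_eq, ENNReal.ofReal_eq_zero, not_le, habs]
    positivity
  have key : (∫ v : Fin n → ℝ, f (P *ᵥ v)) = |P.det|⁻¹ • ∫ x : Fin n → ℝ, f x := by
    have h3 := MeasureTheory.integral_map_equiv (μ := volume) e f
    rw [hmap, integral_smul_measure] at h3
    simp only [he] at h3
    rw [← h3, habs, ENNReal.toReal_ofReal (by positivity : (0:ℝ) ≤ |P.det|⁻¹)]
  constructor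
  · rw [key, smul_smul, mul_inv_cancel₀ (by simpa using hdet), one_smul]
  · have h2 := MeasureTheory.integrable_map_equiv (μ := volume) e f
    rw [hmap, integrable_smul_measure hc0 (by simp)] at h2
    rw [h2]
    simp only [he, Function.comp_def]

lemma real_conjTranspose {n : ℕ} (A : Matrix (Fin n) (Fin n) ℝ) : Aᴴ = Aᵀ := by
  ext i j; simp [conjTranspose_apply]

open scoped MatrixOrder in
lemma diag_setup {n : ℕ} (Ω : Matrix (Fin n) (Fin n) ℂ) (hΩsymm : Ω.IsSymm)
    (hΩim : (Matrix.of fun i j => (Ω i j).im).PosDef) :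
    ∃ (P : Matrix (Fin n) (Fin n) ℝ) (d : Fin n → ℝ), IsUnit P.det ∧
      (P.map Complex.ofReal) * Ω * (P.map Complex.ofReal)ᵀ
        = Matrix.diagonal (fun j => (d j : ℂ) + Complex.I) := by
  set Y : Matrix (Fin n) (Fin n) ℝ := Matrix.of fun i j => (Ω i j).im with hYdef
  set X : Matrix (Fin n) (Fin n) ℝ := Matrix.of fun i j => (Ω i j).re with hXdef
  have hXsym : Xᵀ = X := by
    ext i j
    have h0 : Ωᵀ i j = Ω i j := congrFun (congrFun hΩsymm i) j
    simp only [transpose_apply] at h0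
    simp [hXdef, ← h0]
  set S := CFC.sqrt Y with hSdef
  have hSsym : Sᴴ = S := (Matrix.nonneg_iff_posSemidef.mp (CFC.sqrt_nonneg Y)).isHermitian
  have hSS : S * S = Y := CFC.sqrt_mul_sqrt_self Y hΩim.posSemidef.nonneg
  have hdetS : IsUnit S.det := by
    have : S.det * S.det = Y.det := by rw [← det_mul, hSS]
    have hY : 0 < Y.det := hΩim.det_pos
    have : S.det ≠ 0 := by intro h; rw [h, mul_zero] at this; exact hY.ne' this.symm
    exact (isUnit_iff_ne_zero).2 this
  set Q := S⁻¹ with hQdef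
  have hQsym : Qᴴ = Q := by
    rw [real_conjTranspose, hQdef, transpose_nonsing_inv, ← real_conjTranspose, hSsym]
  have hQYQ : Q * Y * Q = 1 := by
    rw [← hSS, hQdef]
    calc S⁻¹ * (S * S) * S⁻¹ = (S⁻¹ * S) * (S * S⁻¹) := by simp only [mul_assoc]
    _ = 1 := by rw [nonsing_inv_mul S hdetS, mul_nonsing_inv S hdetS, one_mul]
  set M := Q * X * Q with hMdef
  have hM : M.IsHermitian := by
    unfold M
    rw [IsHermitian, conjTranspose_mul, conjTranspose_mul, hQsym, real_conjTranspose X, hXsym,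
      mul_assoc]
  set d := hM.eigenvalues with hddef
  set V : Matrix (Fin n) (Fin n) ℝ := (hM.eigenvectorUnitary : Matrix (Fin n) (Fin n) ℝ) with hVdef
  have hVmem := hM.eigenvectorUnitary.2
  rw [Unitary.mem_iff] at hVmem
  have hspec : M = V * diagonal d * star V := by
    have := hM.spectral_theorem
    convert this using 2
    simp [Unitary.conjStarAlgAut_apply, V, d, Function.comp_def]
  refine ⟨star V * Q, d, ?_, ?_⟩
  · have h1 : (star V * Q) * (S * V) = 1 := by
      calc (star V * Q) * (S * V) = star V * (S⁻¹ * S) * V := by rw [hQdef]; simp only [mul_assoc]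
      _ = 1 := by rw [nonsing_inv_mul S hdetS, mul_one, hVmem.1]
    have h2 : (S * V) * (star V * Q) = 1 := by
      calc (S * V) * (star V * Q) = S * (V * star V) * S⁻¹ := by rw [hQdef]; simp only [mul_assoc]
      _ = 1 := by rw [hVmem.2, mul_one, mul_nonsing_inv S hdetS]
    exact ((Matrix.isUnit_iff_isUnit_det _).1 ⟨⟨star V * Q, S * V, h1, h2⟩, rfl⟩)
  · set P := star V * Q with hPdef
    have hPT : Pᵀ = Q * V := by
      rw [← real_conjTranspose, hPdef, conjTranspose_mul, hQsym, star_eq_conjTranspose, conjTranspose_conjTranspose]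
    have hPXP : P * X * Pᵀ = diagonal d := by
      rw [hPT, hPdef]
      calc star V * Q * X * (Q * V) = star V * (Q * X * Q) * V := by simp only [mul_assoc]
      _ = star V * (V * diagonal d * star V) * V := by rw [← hMdef, ← hspec]
      _ = (star V * V) * diagonal d * (star V * V) := by simp only [mul_assoc]
      _ = diagonal d := by rw [hVmem.1]; simp
    have hPYP : P * Y * Pᵀ = 1 := by
      rw [hPT, hPdef]
      calc star V * Q * Y * (Q * V) = star V * (Q * Y * Q) * V := by simp only [mul_assoc]
      _ = 1 := by rw [hQYQ, mul_one, hVmem.1]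
    have hΩdec : Ω = X.map Complex.ofReal + Complex.I • Y.map Complex.ofReal := by
      ext i j
      simp only [Matrix.add_apply, Matrix.map_apply, Matrix.smul_apply, smul_eq_mul,
        hXdef, hYdef, Matrix.of_apply]
      rw [mul_comm]
      exact (Complex.re_add_im _).symm
    rw [hΩdec]
    have hmapmul : ∀ (A B : Matrix (Fin n) (Fin n) ℝ),
        (A * B).map Complex.ofReal = A.map Complex.ofReal * B.map Complex.ofReal := by
      intro A B
      exact Matrix.map_mul (f := Complex.ofRealHom)
    have hTmap : (P.map Complex.ofReal)ᵀ = Pᵀ.map Complex.ofReal := (transpose_map).symm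
    rw [hTmap]
    rw [mul_add, add_mul, Matrix.mul_smul, Matrix.smul_mul]
    rw [← hmapmul, ← hmapmul, ← hmapmul, ← hmapmul, hPXP, hPYP]
    rw [Matrix.diagonal_map (by simp)]
    ext i j
    by_cases h : i = j
    · subst h; simp [diagonal]
    · simp [diagonal, h, Matrix.one_apply_ne h]

lemma row_gauss {n : ℕ} (Ω : Matrix (Fin n) (Fin n) ℂ) (hΩsymm : Ω.IsSymm)
    (hΩim : (Matrix.of fun i j => (Ω i j).im).PosDef) (z : Fin n → ℂ) :
    Ω.det ≠ 0 ∧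
    Integrable (fun v : Fin n → ℝ => Complex.exp ((Real.pi : ℂ) * Complex.I *
        ((fun p => (v p : ℂ)) ⬝ᵥ Ω *ᵥ (fun p => (v p : ℂ)) + 2 * ((fun p => (v p : ℂ)) ⬝ᵥ z)))) ∧
    (∫ v : Fin n → ℝ, Complex.exp ((Real.pi : ℂ) * Complex.I *
        ((fun p => (v p : ℂ)) ⬝ᵥ Ω *ᵥ (fun p => (v p : ℂ)) + 2 * ((fun p => (v p : ℂ)) ⬝ᵥ z)))) ^ 2
      * (Complex.I⁻¹ • Ω).det
      = Complex.exp (-(2 * (Real.pi : ℂ) * Complex.I) * (z ⬝ᵥ Ω⁻¹ *ᵥ z)) := by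
  obtain ⟨P, d, hPdet, hdiag⟩ := diag_setup Ω hΩsymm hΩim
  set f : (Fin n → ℝ) → ℂ := fun v => Complex.exp ((Real.pi : ℂ) * Complex.I *
      ((fun p => (v p : ℂ)) ⬝ᵥ Ω *ᵥ (fun p => (v p : ℂ)) + 2 * ((fun p => (v p : ℂ)) ⬝ᵥ z)))
    with hfdef
  set Pc : Matrix (Fin n) (Fin n) ℂ := P.map Complex.ofReal with hPcdef
  have hPcdet : Pc.det = (P.det : ℂ) := by
    rw [hPcdef]
    exact (RingHom.map_det Complex.ofRealHom P).symm
  have hPdet0 : (P.det : ℂ) ≠ 0 := by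
    simp only [ne_eq, Complex.ofReal_eq_zero]
    simpa [isUnit_iff_ne_zero] using hPdet
  set c : Fin n → ℂ := fun j => (d j : ℂ) + Complex.I with hcdef
  have hcne : ∀ j, c j ≠ 0 := by
    intro j h
    have := congrArg Complex.im h
    simp [hcdef] at this
  have hprodc : ∏ j, c j ≠ 0 := Finset.prod_ne_zero_iff.2 fun j _ => hcne j
  have hdetprod : (P.det : ℂ) ^ 2 * Ω.det = ∏ j, c j := by
    have h := congrArg Matrix.det hdiag
    rw [Matrix.det_mul, Matrix.det_mul, Matrix.det_transpose, Matrix.det_diagonal] at h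
    rw [← h, hPcdet]; ring
  have hΩdet : Ω.det ≠ 0 := by
    intro h
    rw [h, mul_zero] at hdetprod
    exact hprodc hdetprod.symm
  refine ⟨hΩdet, ?_⟩
  -- diagonal inverse
  have hdiaginv : (Matrix.diagonal c)⁻¹ = Matrix.diagonal (fun j => (c j)⁻¹) := by
    refine Matrix.inv_eq_right_inv ?_
    rw [Matrix.diagonal_mul_diagonal,
      show (fun i => c i * (c i)⁻¹) = fun _ => (1:ℂ) from funext fun j => mul_inv_cancel₀ (hcne j),
      Matrix.diagonal_one]
  have hPcunit : IsUnit Pc.det := by rw [hPcdet]; exact isUnit_iff_ne_zero.2 hPdet0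
  have hPcTunit : IsUnit Pcᵀ.det := by rwa [Matrix.det_transpose]
  have hΩunit : IsUnit Ω.det := isUnit_iff_ne_zero.2 hΩdet
  have hinv : Ω⁻¹ = Pcᵀ * (Matrix.diagonal c)⁻¹ * Pc := by
    have h1 : (Matrix.diagonal c)⁻¹ = (Pc * Ω * Pcᵀ)⁻¹ := by rw [hdiag]
    rw [Matrix.mul_inv_rev, Matrix.mul_inv_rev] at h1
    rw [h1]
    symm
    calc Pcᵀ * (Pcᵀ⁻¹ * (Ω⁻¹ * Pc⁻¹)) * Pc
        = (Pcᵀ * Pcᵀ⁻¹) * Ω⁻¹ * (Pc⁻¹ * Pc) := by simp only [mul_assoc]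
    _ = Ω⁻¹ := by
        rw [Matrix.mul_nonsing_inv _ hPcTunit, Matrix.nonsing_inv_mul _ hPcunit, one_mul, mul_one]
  set wz : Fin n → ℂ := Pc *ᵥ z with hwzdef
  set b : Fin n → ℂ := fun j => (Real.pi : ℂ) * Complex.I * c j with hbdef
  set cc : Fin n → ℂ := fun j => 2 * (Real.pi : ℂ) * Complex.I * wz j with hccdef
  have hbre : ∀ j, (b j).re < 0 := by
    intro j
    show ((Real.pi : ℂ) * Complex.I * ((d j : ℂ) + Complex.I)).re < 0
    simp [Complex.mul_re, Complex.add_re, Real.pi_pos]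
  have hbne : ∀ j, b j ≠ 0 := by
    intro j h
    have := congrArg Complex.re h
    rw [Complex.zero_re] at this
    exact (hbre j).ne this
  -- diagonal dot product lemma
  have hdiagdot : ∀ (e : Fin n → ℂ) (u : Fin n → ℂ),
      u ⬝ᵥ (Matrix.diagonal e *ᵥ u) = ∑ j, e j * u j ^ 2 := by
    intro e u
    simp only [Matrix.mulVec_diagonal, dotProduct]
    exact Finset.sum_congr rfl fun j _ => by ring
  -- key pointwise identity
  have hquad : ∀ u : Fin n → ℂ,
      (Pcᵀ *ᵥ u) ⬝ᵥ Ω *ᵥ (Pcᵀ *ᵥ u) = ∑ j, c j * u j ^ 2 := by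
    intro u
    rw [Matrix.mulVec_transpose, Matrix.dotProduct_mulVec, Matrix.vecMul_vecMul,
      ← Matrix.mulVec_transpose Pc, Matrix.dotProduct_mulVec, Matrix.vecMul_vecMul]
    rw [hdiag]
    simp only [Matrix.vecMul_diagonal, dotProduct]
    exact Finset.sum_congr rfl fun j _ => by ring
  have hlin : ∀ u : Fin n → ℂ, (Pcᵀ *ᵥ u) ⬝ᵥ z = u ⬝ᵥ wz := by
    intro u
    rw [Matrix.mulVec_transpose, hwzdef, ← Matrix.dotProduct_mulVec]
  have hcast : ∀ v : Fin n → ℝ,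
      (fun p => ((Pᵀ *ᵥ v) p : ℂ)) = Pcᵀ *ᵥ (fun p => (v p : ℂ)) := by
    intro v
    funext p
    simp only [Matrix.mulVec, dotProduct, Matrix.transpose_apply, Matrix.map_apply, hPcdef]
    push_cast
    rfl
  have hpt : ∀ v : Fin n → ℝ, f (Pᵀ *ᵥ v) =
      ∏ j, Complex.exp (b j * (v j : ℂ) ^ 2 + cc j * (v j : ℂ)) := by
    intro v
    rw [hfdef]
    simp only
    rw [hcast v, hquad, hlin]
    rw [← Complex.exp_sum]
    congr 1
    rw [dotProduct, Finset.mul_sum, Finset.sum_add_distrib, mul_add,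
      Finset.mul_sum, Finset.mul_sum]
    congr 1
    · exact Finset.sum_congr rfl fun j _ => by rw [hbdef]; ring
    · exact Finset.sum_congr rfl fun j _ => by rw [hccdef]; ring
  -- integrability of the product
  have hgint : Integrable (fun v : Fin n → ℝ =>
      ∏ j, Complex.exp (b j * (v j : ℂ) ^ 2 + cc j * (v j : ℂ))) := by
    apply Integrable.fintype_prod
      (f := fun j (t : ℝ) => Complex.exp (b j * (t : ℂ) ^ 2 + cc j * (t : ℂ)))
    intro j
    simpa using integrable_cexp_quadratic' (hbre j) (cc j) 0
  have hTdetunit : IsUnit Pᵀ.det := by rwa [Matrix.det_transpose]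
  obtain ⟨hchange, hintiff⟩ := cov_aux Pᵀ hTdetunit f
  have hfg : (fun v : Fin n → ℝ => f (Pᵀ *ᵥ v)) = (fun v : Fin n → ℝ =>
      ∏ j, Complex.exp (b j * (v j : ℂ) ^ 2 + cc j * (v j : ℂ))) := funext fun v => hpt v
  constructor
  · exact hintiff.2 (hfg ▸ hgint)
  -- the value of the 1D integrals
  have hIj : ∀ j, (∫ t : ℝ, Complex.exp (b j * (t : ℂ) ^ 2 + cc j * (t : ℂ)))
      = ((Real.pi : ℂ) / -b j) ^ (2⁻¹:ℂ) * Complex.exp (-(cc j ^ 2 / (4 * b j))) := by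
    intro j
    have h := integral_cexp_quadratic (hbre j) (cc j) 0
    simp only [add_zero, zero_sub, one_div] at h
    exact h
  have hval : (∫ v : Fin n → ℝ, f v) = |P.det| •
      ∏ j, (((Real.pi : ℂ) / -b j) ^ (2⁻¹:ℂ) * Complex.exp (-(cc j ^ 2 / (4 * b j)))) := by
    rw [hchange, Matrix.det_transpose]
    congr 1
    rw [show (fun v : Fin n → ℝ => f (Pᵀ *ᵥ v)) = _ from hfg]
    rw [integral_fintype_prod_volume_eq_prod
      (f := fun j (t : ℝ) => Complex.exp (b j * (t : ℂ) ^ 2 + cc j * (t : ℂ)))]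
    exact Finset.prod_congr rfl fun j _ => hIj j
  rw [hval]
  -- squares
  have hsq : ∀ j, (((Real.pi : ℂ) / -b j) ^ (2⁻¹:ℂ) * Complex.exp (-(cc j ^ 2 / (4 * b j)))) ^ 2
      = ((Real.pi : ℂ) / -b j) * Complex.exp (-(cc j ^ 2 / (2 * b j))) := by
    intro j
    have hne : ((Real.pi : ℂ) / -b j) ≠ 0 :=
      div_ne_zero (by exact_mod_cast Real.pi_ne_zero) (neg_ne_zero.2 (hbne j))
    have h1 : (((Real.pi : ℂ) / -b j) ^ (2⁻¹:ℂ)) ^ 2 = (Real.pi : ℂ) / -b j := by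
      rw [sq, ← Complex.cpow_add _ _ hne]
      norm_num
    have h2 : Complex.exp (-(cc j ^ 2 / (4 * b j))) ^ 2
        = Complex.exp (-(cc j ^ 2 / (2 * b j))) := by
      rw [sq, ← Complex.exp_add]
      congr 1
      field_simp [hbne j]
      ring
    rw [mul_pow, h1, h2]
  have hkey : (-Complex.I⁻¹) * Complex.I⁻¹ = 1 := by
    simp [Complex.inv_I, Complex.I_mul_I]
  have hterm : ∀ j, (Real.pi : ℂ) / -b j = (-Complex.I⁻¹) * (c j)⁻¹ := by
    intro j
    have hci : (c j)⁻¹ * c j = 1 := inv_mul_cancel₀ (hcne j)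
    simp only [hbdef]
    rw [Complex.inv_I]
    rw [div_eq_iff (neg_ne_zero.2 (mul_ne_zero (mul_ne_zero
      (Complex.ofReal_ne_zero.2 Real.pi_ne_zero) Complex.I_ne_zero) (hcne j)))]
    linear_combination ((Real.pi : ℂ) * ((c j)⁻¹ * c j)) * Complex.I_sq
      - (Real.pi : ℂ) * hci
  have hdetsmul : (Complex.I⁻¹ • Ω).det = (Complex.I⁻¹) ^ n * Ω.det := by
    rw [Matrix.det_smul, Fintype.card_fin]
  have hzz : z ⬝ᵥ Ω⁻¹ *ᵥ z = ∑ j, (c j)⁻¹ * wz j ^ 2 := by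
    rw [hinv, hdiaginv, ← Matrix.mulVec_mulVec, ← Matrix.mulVec_mulVec,
      Matrix.dotProduct_mulVec z, Matrix.vecMul_transpose, ← hwzdef]
    exact hdiagdot _ wz
  have hEterm : ∀ j, -(cc j ^ 2 / (2 * b j))
      = -(2 * (Real.pi : ℂ) * Complex.I) * ((c j)⁻¹ * wz j ^ 2) := by
    intro j
    have hci : (c j)⁻¹ * c j = 1 := inv_mul_cancel₀ (hcne j)
    simp only [hccdef, hbdef]
    rw [← neg_div]
    rw [div_eq_iff (mul_ne_zero two_ne_zero (mul_ne_zero (mul_ne_zero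
      (Complex.ofReal_ne_zero.2 Real.pi_ne_zero) Complex.I_ne_zero) (hcne j)))]
    linear_combination (4 * (Real.pi : ℂ) ^ 2 * Complex.I ^ 2 * wz j ^ 2) * hci
  have hE : (∑ j, -(cc j ^ 2 / (2 * b j)))
      = -(2 * (Real.pi : ℂ) * Complex.I) * (z ⬝ᵥ Ω⁻¹ *ᵥ z) := by
    rw [hzz, Finset.mul_sum]
    exact Finset.sum_congr rfl fun j _ => hEterm j
  -- assemble
  rw [smul_pow, Complex.real_smul,
    show ((|P.det| ^ 2 : ℝ) : ℂ) = (P.det : ℂ) ^ 2 by rw [_root_.sq_abs]; push_cast; ring]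
  rw [← Finset.prod_pow]
  rw [show (∏ j, (((Real.pi : ℂ) / -b j) ^ (2⁻¹:ℂ) * Complex.exp (-(cc j ^ 2 / (4 * b j)))) ^ 2)
      = ∏ j, (((Real.pi : ℂ) / -b j) * Complex.exp (-(cc j ^ 2 / (2 * b j)))) from
    Finset.prod_congr rfl fun j _ => hsq j]
  rw [Finset.prod_mul_distrib, ← Complex.exp_sum, hE]
  have hF : (∏ j, (Real.pi : ℂ) / -b j) = (-Complex.I⁻¹) ^ n * (∏ j, c j)⁻¹ := by
    rw [show (∏ j, (Real.pi : ℂ) / -b j) = ∏ j, ((-Complex.I⁻¹) * (c j)⁻¹) from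
      Finset.prod_congr rfl fun j _ => hterm j]
    rw [Finset.prod_mul_distrib, Finset.prod_const, Finset.card_univ, Fintype.card_fin,
      ← Finset.prod_inv_distrib]
  rw [hF, hdetsmul]
  have hone : (P.det : ℂ) ^ 2 * ((-Complex.I⁻¹) ^ n * (∏ j, c j)⁻¹) *
      ((Complex.I⁻¹) ^ n * Ω.det) = 1 := by
    have h2 : ((-Complex.I⁻¹) * Complex.I⁻¹) ^ n = 1 := by rw [hkey, one_pow]
    calc (P.det : ℂ) ^ 2 * ((-Complex.I⁻¹) ^ n * (∏ j, c j)⁻¹) * ((Complex.I⁻¹) ^ n * Ω.det)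
        = ((-Complex.I⁻¹) * Complex.I⁻¹) ^ n * (((P.det : ℂ) ^ 2 * Ω.det) * (∏ j, c j)⁻¹) := by
          rw [mul_pow]; ring
      _ = 1 := by rw [h2, hdetprod, one_mul, mul_inv_cancel₀ hprodc]
  linear_combination (Complex.exp (-(2 * (Real.pi : ℂ) * Complex.I) * (z ⬝ᵥ Ω⁻¹ *ᵥ z))) * hone

lemma trace_quad {m n : ℕ} (B : Matrix (Fin m) (Fin n) ℂ) (C : Matrix (Fin n) (Fin n) ℂ) :
    (B * C * Bᵀ).trace = ∑ k, B k ⬝ᵥ C *ᵥ B k := by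
  simp only [Matrix.trace, Matrix.diag_apply, Matrix.mul_apply, Matrix.transpose_apply,
    dotProduct, Matrix.mulVec]
  refine Finset.sum_congr rfl fun k _ => ?_
  simp_rw [Finset.sum_mul, Finset.mul_sum]
  rw [Finset.sum_comm]
  exact Finset.sum_congr rfl fun p _ => Finset.sum_congr rfl fun q _ => by ring

lemma trace_lin {m n : ℕ} (B : Matrix (Fin m) (Fin n) ℂ) (Z : Matrix (Fin m) (Fin n) ℂ) :
    (B * Zᵀ).trace = ∑ k, B k ⬝ᵥ Z k := by
  simp only [Matrix.trace, Matrix.diag_apply, Matrix.mul_apply, Matrix.transpose_apply,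
    dotProduct]

theorem stmt15 {m n : ℕ} (Ω : Matrix (Fin n) (Fin n) ℂ) (hΩsymm : Ω.IsSymm)
    (hΩim : (Matrix.of fun i j => (Ω i j).im).PosDef)
    (Z : Matrix (Fin m) (Fin n) ℂ) :
    IsUnit Ω ∧
    (Complex.I⁻¹ • Ω).det ≠ 0 ∧
    Integrable (fun x : Fin m → Fin n → ℝ =>
      Complex.exp ((Real.pi : ℂ) * Complex.I * Matrix.trace
        ((Matrix.of x).map Complex.ofReal * Ω * ((Matrix.of x).map Complex.ofReal)ᵀ +
          2 • ((Matrix.of x).map Complex.ofReal * Zᵀ)))) ∧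
    (∫ x : Fin m → Fin n → ℝ,
        Complex.exp ((Real.pi : ℂ) * Complex.I * Matrix.trace
          ((Matrix.of x).map Complex.ofReal * Ω * ((Matrix.of x).map Complex.ofReal)ᵀ +
            2 • ((Matrix.of x).map Complex.ofReal * Zᵀ)))) ^ 2 *
      ((Complex.I⁻¹ • Ω).det) ^ m =
      Complex.exp (-(2 * (Real.pi : ℂ) * Complex.I) * Matrix.trace (Z * Ω⁻¹ * Zᵀ)) := by
  have hdet : Ω.det ≠ 0 := (row_gauss Ω hΩsymm hΩim 0).1
  have hDne : (Complex.I⁻¹ • Ω).det ≠ 0 := by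
    rw [Matrix.det_smul, Fintype.card_fin]
    exact mul_ne_zero (pow_ne_zero _ (inv_ne_zero Complex.I_ne_zero)) hdet
  have hpoint : ∀ x : Fin m → Fin n → ℝ,
      Complex.exp ((Real.pi : ℂ) * Complex.I * Matrix.trace
        ((Matrix.of x).map Complex.ofReal * Ω * ((Matrix.of x).map Complex.ofReal)ᵀ +
          2 • ((Matrix.of x).map Complex.ofReal * Zᵀ)))
      = ∏ k, Complex.exp ((Real.pi : ℂ) * Complex.I *
          ((fun p => (x k p : ℂ)) ⬝ᵥ Ω *ᵥ (fun p => (x k p : ℂ)) +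
            2 * ((fun p => (x k p : ℂ)) ⬝ᵥ Z k))) := by
    intro x
    rw [← Complex.exp_sum]
    congr 1
    rw [Matrix.trace_add, Matrix.trace_smul, trace_quad, trace_lin]
    rw [nsmul_eq_mul, Nat.cast_ofNat, Finset.mul_sum, ← Finset.sum_add_distrib,
      Finset.mul_sum]
    rfl
  refine ⟨(Matrix.isUnit_iff_isUnit_det Ω).2 (isUnit_iff_ne_zero.2 hdet), hDne, ?_, ?_⟩
  · simp only [hpoint]
    exact Integrable.fintype_prod (f := fun k (v : Fin n → ℝ) =>
      Complex.exp ((Real.pi : ℂ) * Complex.I *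
        ((fun p => (v p : ℂ)) ⬝ᵥ Ω *ᵥ (fun p => (v p : ℂ)) + 2 * ((fun p => (v p : ℂ)) ⬝ᵥ Z k))))
      (fun k => (row_gauss Ω hΩsymm hΩim (Z k)).2.1)
  · simp only [hpoint]
    rw [integral_fintype_prod_volume_eq_prod (f := fun k (v : Fin n → ℝ) =>
      Complex.exp ((Real.pi : ℂ) * Complex.I *
        ((fun p => (v p : ℂ)) ⬝ᵥ Ω *ᵥ (fun p => (v p : ℂ)) + 2 * ((fun p => (v p : ℂ)) ⬝ᵥ Z k))))]
    rw [trace_quad, Finset.mul_sum, Complex.exp_sum]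
    rw [← Finset.prod_pow, show ((Complex.I⁻¹ • Ω).det) ^ m
        = ∏ _k : Fin m, (Complex.I⁻¹ • Ω).det by
      rw [Finset.prod_const, Finset.card_univ, Fintype.card_fin]]
    rw [← Finset.prod_mul_distrib]
    exact Finset.prod_congr rfl fun k _ => (row_gauss Ω hΩsymm hΩim (Z k)).2.2
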